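/- Let G be a graph and A, X, Y, Z be four disjoint sets of vertices of G. If A is connected and A sees each of X, Y and Z, then A is of type path, of type claw, or of type triangle with respect to X, Y and Z. -/
import Mathlib


open SimpleGraph

/-! Basic notions: seeing, anticompleteness, completeness between vertex sets. -/

/-- `Sees G X Y` : some vertex of `X` is adjacent (in `G`) to some vertex of `Y`. -/
def Sees {V : Type} (G : SimpleGraph V) (X Y : Set V) : Prop :=
  ∃ x ∈ X, ∃ y ∈ Y, G.Adj x y

/-- `X` is anticomplete to `Y` : there is no edge between `X` and `Y`. -/
def Anticomplete {V : Type} (G : SimpleGraph V) (X Y : Set V) : Prop :=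
  ∀ x ∈ X, ∀ y ∈ Y, ¬G.Adj x y

/-- `X` is complete to `Y` : every vertex of `X` is adjacent to every vertex of `Y`. -/
def CompleteTo {V : Type} (G : SimpleGraph V) (X Y : Set V) : Prop :=
  ∀ x ∈ X, ∀ y ∈ Y, G.Adj x y

/-- A chordless (induced) path of `G` with all vertices in `A`, given by an injective
enumeration `p` of its vertices, consecutive vertices being exactly the adjacent pairs. -/
def IsPathIn {V : Type} (G : SimpleGraph V) (A : Set V) {n : ℕ} (p : Fin (n + 1) → V) : Prop :=
  Function.Injective p ∧ (∀ i, p i ∈ A) ∧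
    ∀ i j, G.Adj (p i) (p j) ↔ (i.val + 1 = j.val ∨ j.val + 1 = i.val)

/-! Induced minors. -/

/-- An induced minor model of `H` in `G`: pairwise disjoint branch sets, each inducing a
connected subgraph, with an edge between two branch sets iff the corresponding vertices of
`H` are adjacent. -/
def IsInducedMinorModel {V W : Type} (G : SimpleGraph V) (H : SimpleGraph W)
    (X : W → Set V) : Prop :=
  (∀ w, (X w).Nonempty) ∧
    (∀ w, (G.induce (X w)).Connected) ∧
    (Pairwise fun u w => Disjoint (X u) (X w)) ∧
    (∀ u w, u ≠ w → (Sees G (X u) (X w) ↔ H.Adj u w))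

/-- `G` contains `H` as an induced minor. -/
def ContainsInducedMinor {V W : Type} (G : SimpleGraph V) (H : SimpleGraph W) : Prop :=
  ∃ X : W → Set V, IsInducedMinorModel G H X

/-! Thetas, prisms, pyramids, 3-path configurations. -/

/-- The theta graph with two hub vertices (`Sum.inl 0`, `Sum.inl 1`) joined by three paths,
path `i` having length `k i` (hence `k i - 1` internal vertices). -/
def thetaGraph (k : Fin 3 → ℕ) :
    SimpleGraph (Fin 2 ⊕ (Σ i : Fin 3, Fin (k i - 1))) :=
  SimpleGraph.fromRel fun u v =>
    match u, v with
    | Sum.inl a, Sum.inr ⟨i, j⟩ => (a = 0 ∧ j.val = 0) ∨ (a = 1 ∧ j.val = k i - 2)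
    | Sum.inr ⟨i, j⟩, Sum.inr ⟨i', j'⟩ => i = i' ∧ j.val + 1 = j'.val
    | _, _ => False

/-- Admissible path lengths for a theta: all three paths have length at least two. -/
def ThetaLengths (k : Fin 3 → ℕ) : Prop := ∀ i, 2 ≤ k i

/-- The prism graph made of three paths, path `i` having length `l i` (so `l i + 1` vertices
`(i,0),…,(i,l i)`), with triangles on the vertices `(i,0)` and on the vertices `(i, l i)`. -/
def prismGraph (l : Fin 3 → ℕ) : SimpleGraph (Σ i : Fin 3, Fin (l i + 1)) :=
  SimpleGraph.fromRel fun u v =>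
    (u.1 = v.1 ∧ u.2.val + 1 = v.2.val) ∨
      (u.1 ≠ v.1 ∧ ((u.2.val = 0 ∧ v.2.val = 0) ∨ (u.2.val = l u.1 ∧ v.2.val = l v.1)))

/-- Admissible path lengths for a prism: all three paths have length at least one, or one
has length zero and the two others have length at least two. -/
def PrismLengths (l : Fin 3 → ℕ) : Prop :=
  (∀ i, 1 ≤ l i) ∨ (∃ i, l i = 0 ∧ ∀ j, j ≠ i → 2 ≤ l j)

/-- The pyramid graph with apex `Sum.inl ()` and three paths, path `i` having length `m i`
(its vertices other than the apex being `(i,0),…,(i, m i - 1)`), whose far endpoints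
`(i, m i - 1)` form a triangle. -/
def pyramidGraph (m : Fin 3 → ℕ) : SimpleGraph (Unit ⊕ (Σ i : Fin 3, Fin (m i))) :=
  SimpleGraph.fromRel fun u v =>
    match u, v with
    | Sum.inl _, Sum.inr ⟨_, j⟩ => j.val = 0
    | Sum.inr ⟨i, j⟩, Sum.inr ⟨i', j'⟩ =>
        (i = i' ∧ j.val + 1 = j'.val) ∨ (i ≠ i' ∧ j.val = m i - 1 ∧ j'.val = m i' - 1)
    | _, _ => False

/-- Admissible path lengths for a pyramid: all of length at least one, at most one of
length exactly one. -/
def PyramidLengths (m : Fin 3 → ℕ) : Prop :=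
  (∀ i, 1 ≤ m i) ∧ ∃ i, ∀ j, j ≠ i → 2 ≤ m j

/-- `G` contains a theta as an induced subgraph. -/
def ContainsTheta {V : Type} (G : SimpleGraph V) : Prop :=
  ∃ k, ThetaLengths k ∧ Nonempty (thetaGraph k ↪g G)

/-- `G` contains a prism as an induced subgraph. -/
def ContainsPrism {V : Type} (G : SimpleGraph V) : Prop :=
  ∃ l, PrismLengths l ∧ Nonempty (prismGraph l ↪g G)

/-- `G` contains a pyramid as an induced subgraph. -/
def ContainsPyramid {V : Type} (G : SimpleGraph V) : Prop :=
  ∃ m, PyramidLengths m ∧ Nonempty (pyramidGraph m ↪g G)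

/-- `G` contains a 3-path configuration as an induced subgraph. -/
def Contains3PC {V : Type} (G : SimpleGraph V) : Prop :=
  ContainsTheta G ∨ ContainsPrism G ∨ ContainsPyramid G

/-- `G` is (isomorphic to) a theta. -/
def IsThetaGraph {V : Type} (G : SimpleGraph V) : Prop :=
  ∃ k, ThetaLengths k ∧ Nonempty (thetaGraph k ≃g G)

/-- `G` is (isomorphic to) a prism. -/
def IsPrismGraph {V : Type} (G : SimpleGraph V) : Prop :=
  ∃ l, PrismLengths l ∧ Nonempty (prismGraph l ≃g G)

/-- `G` is (isomorphic to) a pyramid. -/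
def IsPyramidGraph {V : Type} (G : SimpleGraph V) : Prop :=
  ∃ m, PyramidLengths m ∧ Nonempty (pyramidGraph m ≃g G)

/-- `G` is a 3-path configuration. -/
def Is3PC {V : Type} (G : SimpleGraph V) : Prop :=
  IsThetaGraph G ∨ IsPrismGraph G ∨ IsPyramidGraph G

/-- `G` contains a triangle. -/
def ContainsTriangle {V : Type} (G : SimpleGraph V) : Prop :=
  ∃ x y z : V, G.Adj x y ∧ G.Adj y z ∧ G.Adj x z

/-- `S` induces a hole (chordless cycle of length at least 4) in `G`. -/
def IsHole {V : Type} (G : SimpleGraph V) (S : Set V) : Prop :=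
  ∃ n, 4 ≤ n ∧ Nonempty (SimpleGraph.cycleGraph n ≃g G.induce S)

/-- The `k × k` grid graph. -/
def gridGraph (k : ℕ) : SimpleGraph (Fin k × Fin k) :=
  SimpleGraph.fromRel fun p q => Nat.dist p.1.val q.1.val + Nat.dist p.2.val q.2.val = 1

/-! Types of connected sets with respect to three sets `X`, `Y`, `Z`. -/

/-- `A` is of type path centered at `Y` with respect to `X`, `Y`, `Z`: there is a path
`P = x…z` in `A` such that `x` sees `X`, `z` sees `Z`, `P` sees `Y`, `P∖x` is anticomplete
to `X` and `P∖z` is anticomplete to `Z`. -/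
def TypePathCenteredMid {V : Type} (G : SimpleGraph V) (A X Y Z : Set V) : Prop :=
  ∃ (n : ℕ) (p : Fin (n + 1) → V),
    IsPathIn G A p ∧
    Sees G {p 0} X ∧ Sees G {p (Fin.last n)} Z ∧ Sees G (Set.range p) Y ∧
    Anticomplete G (Set.range p \ {p 0}) X ∧
    Anticomplete G (Set.range p \ {p (Fin.last n)}) Z

/-- `A` is of type path with respect to `X`, `Y`, `Z`: it is of type path centered at `X`,
at `Y`, or at `Z`. -/
def TypePath {V : Type} (G : SimpleGraph V) (A X Y Z : Set V) : Prop :=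
  TypePathCenteredMid G A Y X Z ∨ TypePathCenteredMid G A X Y Z ∨ TypePathCenteredMid G A X Z Y

/-- `A` is of type claw with respect to `X`, `Y`, `Z`. -/
def TypeClaw {V : Type} (G : SimpleGraph V) (A X Y Z : Set V) : Prop :=
  ∃ (nP nQ nR : ℕ) (p : Fin (nP + 1) → V) (q : Fin (nQ + 1) → V) (r : Fin (nR + 1) → V),
    IsPathIn G A p ∧ IsPathIn G A q ∧ IsPathIn G A r ∧
    p 0 = q 0 ∧ q 0 = r 0 ∧
    Set.range p ∩ Set.range q ∩ Set.range r = {p 0} ∧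
    Anticomplete G (Set.range p \ {p 0}) (Set.range q \ {p 0}) ∧
    Anticomplete G (Set.range p \ {p 0}) (Set.range r \ {p 0}) ∧
    Anticomplete G (Set.range q \ {p 0}) (Set.range r \ {p 0}) ∧
    Sees G {p (Fin.last nP)} X ∧ Sees G {q (Fin.last nQ)} Y ∧ Sees G {r (Fin.last nR)} Z ∧
    Anticomplete G ((Set.range p ∪ Set.range q ∪ Set.range r) \ {p (Fin.last nP)}) X ∧
    Anticomplete G ((Set.range p ∪ Set.range q ∪ Set.range r) \ {q (Fin.last nQ)}) Y ∧
    Anticomplete G ((Set.range p ∪ Set.range q ∪ Set.range r) \ {r (Fin.last nR)}) Z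

/-- `A` is of type triangle with respect to `X`, `Y`, `Z`. -/
def TypeTriangle {V : Type} (G : SimpleGraph V) (A X Y Z : Set V) : Prop :=
  ∃ (nP nQ nR : ℕ) (p : Fin (nP + 1) → V) (q : Fin (nQ + 1) → V) (r : Fin (nR + 1) → V),
    IsPathIn G A p ∧ IsPathIn G A q ∧ IsPathIn G A r ∧
    Disjoint (Set.range p) (Set.range q) ∧ Disjoint (Set.range p) (Set.range r) ∧
    Disjoint (Set.range q) (Set.range r) ∧
    G.Adj (p 0) (q 0) ∧ G.Adj (q 0) (r 0) ∧ G.Adj (p 0) (r 0) ∧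
    (∀ u ∈ Set.range p, ∀ v ∈ Set.range q, G.Adj u v → u = p 0 ∧ v = q 0) ∧
    (∀ u ∈ Set.range q, ∀ v ∈ Set.range r, G.Adj u v → u = q 0 ∧ v = r 0) ∧
    (∀ u ∈ Set.range p, ∀ v ∈ Set.range r, G.Adj u v → u = p 0 ∧ v = r 0) ∧
    Sees G {p (Fin.last nP)} X ∧ Sees G {q (Fin.last nQ)} Y ∧ Sees G {r (Fin.last nR)} Z ∧
    Anticomplete G ((Set.range p ∪ Set.range q ∪ Set.range r) \ {p (Fin.last nP)}) X ∧
    Anticomplete G ((Set.range p ∪ Set.range q ∪ Set.range r) \ {q (Fin.last nQ)}) Y ∧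
    Anticomplete G ((Set.range p ∪ Set.range q ∪ Set.range r) \ {r (Fin.last nR)}) Z

/-! Line graphs and subdivisions. -/

/-- The line graph of `G`: vertices are the edges of `G`, two of them being adjacent iff
they are distinct and share an endpoint. -/
def LineGraph {V : Type} (G : SimpleGraph V) : SimpleGraph G.edgeSet :=
  SimpleGraph.fromRel fun e f => ∃ v : V, v ∈ (e : Sym2 V) ∧ v ∈ (f : Sym2 V)

/-- The graph obtained from `G` by subdividing the edge `uv` once, the new vertex being
`Option.none`. -/
def subdivideEdge {V : Type} (G : SimpleGraph V) (u v : V) : SimpleGraph (Option V) :=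
  SimpleGraph.fromRel fun a b =>
    match a, b with
    | some x, some y => G.Adj x y ∧ ¬(x = u ∧ y = v) ∧ ¬(x = v ∧ y = u)
    | some x, none => x = u ∨ x = v
    | _, _ => False

/-- `IsSubdivision G H` : `H` is (isomorphic to) a graph obtained from `G` by repeatedly
subdividing edges. -/
inductive IsSubdivision : {α : Type} → SimpleGraph α → {β : Type} → SimpleGraph β → Prop
  | refl {α : Type} (G : SimpleGraph α) : IsSubdivision G G
  | step {α β : Type} {G : SimpleGraph α} {H : SimpleGraph β} {u v : β} :
      IsSubdivision G H → H.Adj u v → IsSubdivision G (subdivideEdge H u v)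
  | iso {α β γ : Type} {G : SimpleGraph α} {H : SimpleGraph β} {H' : SimpleGraph γ} :
      IsSubdivision G H → (H ≃g H') → IsSubdivision G H'

/-! Auxiliary machinery for the proof of Statement 4. -/



/-- walk in `B`, `n` edges, vertices `p 0, …, p n`. -/
def NWalk {V : Type} (G : SimpleGraph V) (B : Set V) (n : ℕ) (p : ℕ → V) : Prop :=
  (∀ i ≤ n, p i ∈ B) ∧ ∀ i < n, G.Adj (p i) (p (i+1))

/-- induced path in `B` on indices `0..n`. -/
def NPath {V : Type} (G : SimpleGraph V) (B : Set V) (n : ℕ) (p : ℕ → V) : Prop :=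
  (∀ i ≤ n, p i ∈ B) ∧
  (∀ i ≤ n, ∀ j ≤ n, p i = p j → i = j) ∧
  (∀ i ≤ n, ∀ j ≤ n, (G.Adj (p i) (p j) ↔ (j = i + 1 ∨ i = j + 1)))

def nrange {V : Type} (p : ℕ → V) (n : ℕ) : Set V := {x | ∃ i ≤ n, p i = x}

theorem npath_nwalk {V : Type} {G : SimpleGraph V} {B : Set V} {n : ℕ} {p : ℕ → V}
    (h : NPath G B n p) : NWalk G B n p := by
  refine ⟨h.1, fun i hi => ?_⟩
  exact (h.2.2 i (by omega) (i+1) (by omega)).2 (Or.inl rfl)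

theorem nwalk_mono {V : Type} {G : SimpleGraph V} {B B' : Set V} {n : ℕ} {p : ℕ → V}
    (h : NWalk G B n p) (hBB : B ⊆ B') : NWalk G B' n p :=
  ⟨fun i hi => hBB (h.1 i hi), h.2⟩

theorem npath_mono {V : Type} {G : SimpleGraph V} {B B' : Set V} {n : ℕ} {p : ℕ → V}
    (h : NPath G B n p) (hBB : B ⊆ B') : NPath G B' n p :=
  ⟨fun i hi => hBB (h.1 i hi), h.2⟩

theorem npath_isPathIn {V : Type} {G : SimpleGraph V} {B : Set V} {n : ℕ} {p : ℕ → V}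
    (h : NPath G B n p) : IsPathIn G B (fun i : Fin (n+1) => p i.val) := by
  refine ⟨fun i j hij => ?_, fun i => h.1 i.val (by omega), fun i j => ?_⟩
  · exact Fin.ext (h.2.1 i.val (by omega) j.val (by omega) hij)
  · have := h.2.2 i.val (by omega) j.val (by omega)
    simpa [eq_comm] using this

theorem range_fin_eq {V : Type} {n : ℕ} (p : ℕ → V) :
    Set.range (fun i : Fin (n+1) => p i.val) = nrange p n := by
  ext x
  constructor
  · rintro ⟨i, rfl⟩; exact ⟨i.val, by omega, rfl⟩
  · rintro ⟨i, hi, rfl⟩; exact ⟨⟨i, by omega⟩, rfl⟩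

/-- From connectivity of the induced subgraph, extract an `NWalk`. -/
theorem nwalk_of_connected {V : Type} {G : SimpleGraph V} {B : Set V}
    (hconn : (G.induce B).Connected) {u v : V} (hu : u ∈ B) (hv : v ∈ B) :
    ∃ n p, NWalk G B n p ∧ p 0 = u ∧ p n = v := by
  obtain ⟨w⟩ := hconn.preconnected ⟨u, hu⟩ ⟨v, hv⟩
  refine ⟨w.length, fun i => (w.getVert i).val, ⟨fun i _ => (w.getVert i).prop, ?_⟩, ?_, ?_⟩
  · intro i hi
    exact w.adj_getVert_succ hi
  · show (w.getVert 0).val = u; rw [w.getVert_zero]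
  · show (w.getVert w.length).val = v; rw [w.getVert_length]

theorem reachable_of_nwalk {V : Type} {G : SimpleGraph V} {B : Set V} :
    ∀ {n : ℕ} {p : ℕ → V}, NWalk G B n p → ∀ (hu : p 0 ∈ B) (hv : p n ∈ B),
    (G.induce B).Reachable ⟨p 0, hu⟩ ⟨p n, hv⟩ := by
  intro n
  induction n with
  | zero => intro p _ hu hv; exact Reachable.refl _
  | succ n ih =>
    intro p h hu hv
    have hq : NWalk G B n (fun i => p (i+1)) :=
      ⟨fun i hi => h.1 (i+1) (by omega), fun i hi => h.2 (i+1) (by omega)⟩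
    have hr := ih hq (h.1 1 (by omega)) hv
    have hadj : (G.induce B).Adj ⟨p 0, hu⟩ ⟨p 1, h.1 1 (by omega)⟩ := h.2 0 (by omega)
    exact hadj.reachable.trans hr

/-- Build induced-subgraph connectivity from pairwise `NWalk`s. -/
theorem connected_of_nwalks {V : Type} {G : SimpleGraph V} {B : Set V}
    (hne : B.Nonempty)
    (h : ∀ u ∈ B, ∀ v ∈ B, ∃ n p, NWalk G B n p ∧ p 0 = u ∧ p n = v) :
    (G.induce B).Connected := by
  rw [SimpleGraph.connected_iff]
  refine ⟨?_, ⟨⟨hne.choose, hne.choose_spec⟩⟩⟩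
  rintro ⟨u, hu⟩ ⟨v, hv⟩
  obtain ⟨n, p, hw, h0, hn⟩ := h u hu v hv
  have := reachable_of_nwalk hw (hw.1 0 (by omega)) (hw.1 n le_rfl)
  subst h0; subst hn
  exact this
section
variable {V : Type} {G : SimpleGraph V} {B : Set V}

/-- Workhorse: a shortest walk whose ends satisfy `S`, `T` is an induced path with
exclusive ends. -/
theorem exists_min_npath (S T : V → Prop)
    (hex : ∃ n, ∃ p, NWalk G B n p ∧ S (p 0) ∧ T (p n)) :
    ∃ n p, NPath G B n p ∧ S (p 0) ∧ T (p n) ∧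
      (∀ i, 0 < i → i ≤ n → ¬S (p i)) ∧ (∀ i < n, ¬T (p i)) := by
  classical
  obtain ⟨p, hw, hS, hT⟩ := Nat.find_spec hex
  have hmin : ∀ m, m < Nat.find hex → ¬∃ p, NWalk G B m p ∧ S (p 0) ∧ T (p m) :=
    fun m hm => Nat.find_min hex hm
  generalize hgen : Nat.find hex = n at hw hS hT hmin
  -- exclusive ends
  have hSx : ∀ i, 0 < i → i ≤ n → ¬S (p i) := by
    intro i h0 hi hSi
    refine hmin (n - i) (by omega) ⟨fun t => p (i + t), ⟨fun t ht => hw.1 (i+t) (by omega),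
      fun t ht => by have := hw.2 (i+t) (by omega); rwa [show i+t+1 = i+(t+1) from by omega] at this⟩,
      by simpa using hSi, ?_⟩
    show T (p (i + (n - i)))
    rw [show i + (n - i) = n from by omega]; exact hT
  have hTx : ∀ i, i < n → ¬T (p i) := by
    intro i hi hTi
    exact hmin i hi ⟨p, ⟨fun t ht => hw.1 t (by omega), fun t ht => hw.2 t (by omega)⟩, hS, hTi⟩
  -- injectivity
  have hinj : ∀ i j, i ≤ n → j ≤ n → i < j → p i ≠ p j := by
    intro i j hi hj hij heq
    refine hmin (n - (j - i)) (by omega) ⟨fun t => if t ≤ i then p t else p (t + (j - i)), ⟨?_, ?_⟩, ?_, ?_⟩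
    · intro t ht
      by_cases h : t ≤ i
      · simp only [h, if_pos]; exact hw.1 t (by omega)
      · simp only [h, if_neg, if_false]; exact hw.1 (t + (j-i)) (by omega)
    · intro t ht
      by_cases h1 : t + 1 ≤ i
      · simp only [show t ≤ i from by omega, if_pos, h1]; exact hw.2 t (by omega)
      · by_cases h2 : t ≤ i
        · have hti : t = i := by omega
          simp only [h2, if_pos, h1, if_neg, if_false]
          rw [show t = i from hti, show i + 1 + (j - i) = j + 1 from by omega, heq]
          exact hw.2 j (by omega)
        · simp only [h2, h1, if_neg, if_false]
          have := hw.2 (t + (j - i)) (by omega)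
          rwa [show t + (j-i) + 1 = t + 1 + (j - i) from by omega] at this
    · simp only [show (0:ℕ) ≤ i from by omega, if_pos]; exact hS
    · show T (if n - (j-i) ≤ i then p (n-(j-i)) else p (n-(j-i)+(j-i)))
      by_cases h : n - (j - i) ≤ i
      · rw [if_pos h, show n - (j - i) = i from by omega, heq, show j = n from by omega]; exact hT
      · rw [if_neg h, show n - (j-i) + (j-i) = n from by omega]; exact hT
  -- no chords
  have hchord : ∀ i j, i ≤ n → j ≤ n → i + 2 ≤ j → ¬G.Adj (p i) (p j) := by
    intro i j hi hj hij hadj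
    refine hmin (n - (j - i - 1)) (by omega)
      ⟨fun t => if t ≤ i then p t else p (t + (j - i - 1)), ⟨?_, ?_⟩, ?_, ?_⟩
    · intro t ht
      by_cases h : t ≤ i
      · simp only [h, if_pos]; exact hw.1 t (by omega)
      · simp only [h, if_neg, if_false]; exact hw.1 (t + (j-i-1)) (by omega)
    · intro t ht
      by_cases h1 : t + 1 ≤ i
      · simp only [show t ≤ i from by omega, if_pos, h1]; exact hw.2 t (by omega)
      · by_cases h2 : t ≤ i
        · have hti : t = i := by omega
          simp only [h2, if_pos, h1, if_neg, if_false]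
          rw [show t = i from hti, show i + 1 + (j - i - 1) = j from by omega]
          exact hadj
        · simp only [h2, h1, if_neg, if_false]
          have := hw.2 (t + (j - i - 1)) (by omega)
          rwa [show t + (j-i-1) + 1 = t + 1 + (j - i - 1) from by omega] at this
    · simp only [show (0:ℕ) ≤ i from by omega, if_pos]; exact hS
    · show T (if n - (j-i-1) ≤ i then p (n-(j-i-1)) else p (n-(j-i-1)+(j-i-1)))
      rw [if_neg (by omega), show n - (j-i-1) + (j-i-1) = n from by omega]; exact hT
  refine ⟨n, p, ⟨hw.1, ?_, ?_⟩, hS, hT, hSx, hTx⟩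
  · intro i hi j hj heq
    rcases lt_trichotomy i j with h | h | h
    · exact absurd heq (hinj i j hi hj h)
    · exact h
    · exact absurd heq.symm (hinj j i hj hi h)
  · intro i hi j hj
    constructor
    · intro hadj
      rcases lt_trichotomy i j with h | h | h
      · by_cases hc : j = i + 1
        · exact Or.inl hc
        · exact absurd hadj (hchord i j hi hj (by omega))
      · subst h; exact absurd hadj G.irrefl
      · by_cases hc : i = j + 1
        · exact Or.inr hc
        · exact absurd hadj.symm (hchord j i hj hi (by omega))
    · rintro (rfl | rfl)
      · exact hw.2 i (by omega)
      · exact (hw.2 j (by omega)).symm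

theorem npath_seg {n : ℕ} {p : ℕ → V} (h : NPath G B n p) {a m : ℕ} (hm : a + m ≤ n) :
    NPath G B m (fun i => p (a + i)) := by
  refine ⟨fun i hi => h.1 (a+i) (by omega), fun i hi j hj heq => ?_, fun i hi j hj => ?_⟩
  · have := h.2.1 (a+i) (by omega) (a+j) (by omega) heq; omega
  · have := h.2.2 (a+i) (by omega) (a+j) (by omega)
    rw [this]; omega
theorem npath_rev {n : ℕ} {p : ℕ → V} (h : NPath G B n p) :
    NPath G B n (fun i => p (n - i)) := by
  refine ⟨fun i hi => h.1 (n-i) (by omega), fun i hi j hj heq => ?_, fun i hi j hj => ?_⟩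
  · have := h.2.1 (n-i) (by omega) (n-j) (by omega) heq; omega
  · have := h.2.2 (n-i) (by omega) (n-j) (by omega)
    rw [this]; omega

theorem npath_concat {n m : ℕ} {p q : ℕ → V} (hp : NPath G B n p) (hq : NPath G B m q)
    (hdisj : ∀ i ≤ n, ∀ j ≤ m, p i ≠ q j)
    (hcross : ∀ i ≤ n, ∀ j ≤ m, (G.Adj (p i) (q j) ↔ (i = n ∧ j = 0))) :
    NPath G B (n + 1 + m) (fun t => if t ≤ n then p t else q (t - (n+1))) := by
  refine ⟨?_, ?_, ?_⟩
  · intro t ht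
    by_cases h : t ≤ n
    · simp only [h, if_pos]; exact hp.1 t h
    · simp only [h, if_neg, if_false]; exact hq.1 (t - (n+1)) (by omega)
  · intro t ht s hs heq
    by_cases h1 : t ≤ n <;> by_cases h2 : s ≤ n <;> simp only [h1, h2, if_pos, if_neg, if_false] at heq
    · exact hp.2.1 t h1 s h2 heq
    · exact absurd heq (hdisj t h1 _ (by omega))
    · exact absurd heq.symm (hdisj s h2 _ (by omega))
    · have := hq.2.1 (t-(n+1)) (by omega) (s-(n+1)) (by omega) heq; omega
  · intro t ht s hs
    by_cases h1 : t ≤ n <;> by_cases h2 : s ≤ n <;> simp only [h1, h2, if_pos, if_neg, if_false]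
    · rw [hp.2.2 t h1 s h2]
    · rw [hcross t h1 (s - (n+1)) (by omega)]; omega
    · rw [G.adj_comm, hcross s h2 (t - (n+1)) (by omega)]; omega
    · rw [hq.2.2 (t-(n+1)) (by omega) (s-(n+1)) (by omega)]; omega
end

/-! Connectivity utilities. -/
section
variable {V : Type} {G : SimpleGraph V} {B B1 B2 : Set V}

theorem npath_trunc {n : ℕ} {p : ℕ → V} (h : NPath G B n p) {m : ℕ} (hm : m ≤ n) :
    NPath G B m p :=
  ⟨fun i hi => h.1 i (le_trans hi hm), fun i hi j hj => h.2.1 i (by omega) j (by omega),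
   fun i hi j hj => h.2.2 i (by omega) j (by omega)⟩

theorem npath_single {v : V} (hv : v ∈ B) : NPath G B 0 (fun _ => v) := by
  refine ⟨fun i _ => hv, fun i hi j hj _ => by omega, fun i hi j hj => ?_⟩
  constructor
  · intro h; exact absurd h G.irrefl
  · intro h; omega

theorem nwalk_rev {n : ℕ} {p : ℕ → V} (h : NWalk G B n p) :
    NWalk G B n (fun t => p (n - t)) := by
  refine ⟨fun i hi => h.1 (n-i) (by omega), fun t ht => ?_⟩
  have := h.2 (n - t - 1) (by omega)
  rw [show n - t - 1 + 1 = n - t from by omega] at this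
  show G.Adj (p (n - t)) (p (n - (t+1)))
  rw [show n - (t+1) = n - t - 1 from by omega]
  exact this.symm

/-- pairwise walk-connectivity inside a set. -/
def WConn {V : Type} (G : SimpleGraph V) (B : Set V) : Prop :=
  ∀ u ∈ B, ∀ v ∈ B, ∃ n p, NWalk G B n p ∧ p 0 = u ∧ p n = v

theorem nwalk_glue {n m : ℕ} {p q : ℕ → V} (hp : NWalk G B n p) (hq : NWalk G B m q)
    (hpq : p n = q 0) :
    ∃ r, NWalk G B (n + m) r ∧ r 0 = p 0 ∧ r (n+m) = q m := by
  refine ⟨fun t => if t ≤ n then p t else q (t - n), ⟨?_, ?_⟩, ?_, ?_⟩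
  · intro t ht
    show (if t ≤ n then p t else q (t - n)) ∈ B
    by_cases h : t ≤ n
    · rw [if_pos h]; exact hp.1 t h
    · rw [if_neg h]; exact hq.1 (t - n) (by omega)
  · intro t ht
    show G.Adj (if t ≤ n then p t else q (t - n)) (if t + 1 ≤ n then p (t+1) else q (t + 1 - n))
    by_cases h1 : t + 1 ≤ n
    · rw [if_pos (by omega : t ≤ n), if_pos h1]; exact hp.2 t (by omega)
    · by_cases h2 : t ≤ n
      · have htn : t = n := by omega
        rw [if_pos h2, if_neg h1, htn, hpq, show n + 1 - n = 1 from by omega]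
        exact hq.2 0 (by omega)
      · rw [if_neg h2, if_neg (by omega : ¬ (t+1 ≤ n)), show t + 1 - n = (t - n) + 1 from by omega]
        exact hq.2 (t - n) (by omega)
  · show (if (0:ℕ) ≤ n then p 0 else q (0 - n)) = p 0
    rw [if_pos (by omega : (0:ℕ) ≤ n)]
  · show (if n + m ≤ n then p (n+m) else q (n + m - n)) = q m
    by_cases h : n + m ≤ n
    · rw [if_pos h, show n + m = n from by omega, hpq, show m = 0 from by omega]
    · rw [if_neg h, show n + m - n = m from by omega]

theorem wconn_union (h1 : WConn G B1) (h2 : WConn G B2) {b1 b2 : V}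
    (hb1 : b1 ∈ B1) (hb2 : b2 ∈ B2) (hadj : G.Adj b1 b2) : WConn G (B1 ∪ B2) := by
  have edge : ∀ {c1 c2 : V}, c1 ∈ B1 ∪ B2 → c2 ∈ B1 ∪ B2 → G.Adj c1 c2 →
      ∃ n p, NWalk G (B1 ∪ B2) n p ∧ p 0 = c1 ∧ p n = c2 := by
    intro c1 c2 hc1 hc2 h
    refine ⟨1, fun t => if t = 0 then c1 else c2, ⟨?_, ?_⟩, by simp, by simp⟩
    · intro t ht
      show (if t = 0 then c1 else c2) ∈ B1 ∪ B2
      by_cases h0 : t = 0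
      · rw [if_pos h0]; exact hc1
      · rw [if_neg h0]; exact hc2
    · intro t ht
      have ht0 : t = 0 := by omega
      subst ht0; simpa using h
  have toB1 : ∀ u ∈ B1 ∪ B2, ∃ n p, NWalk G (B1 ∪ B2) n p ∧ p 0 = u ∧ p n = b1 := by
    rintro u (hu | hu)
    · obtain ⟨n, p, hw, h0, hn⟩ := h1 u hu b1 hb1
      exact ⟨n, p, nwalk_mono hw Set.subset_union_left, h0, hn⟩
    · obtain ⟨n, p, hw, h0, hn⟩ := h2 u hu b2 hb2
      obtain ⟨n', p', hw', h0', hn'⟩ := edge (Or.inr hb2) (Or.inl hb1) hadj.symm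
      obtain ⟨r, hr, hr0, hrn⟩ := nwalk_glue (nwalk_mono hw Set.subset_union_right) hw'
        (by rw [hn, h0'])
      exact ⟨n + n', r, hr, by rw [hr0, h0], by rw [hrn, hn']⟩
  intro u hu v hv
  obtain ⟨n, p, hw, h0, hn⟩ := toB1 u hu
  obtain ⟨n', p', hw', h0', hn'⟩ := toB1 v hv
  have hrev := nwalk_rev hw'
  obtain ⟨r, hr, hr0, hrn⟩ := nwalk_glue hw hrev
    (by show p n = p' (n' - 0); rw [Nat.sub_zero, hn', hn])
  refine ⟨n + n', r, hr, by rw [hr0, h0], ?_⟩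
  rw [hrn]; show p' (n' - n') = v; rw [Nat.sub_self, h0']

theorem wconn_nrange {n : ℕ} {p : ℕ → V} (h : NPath G B n p) : WConn G (nrange p n) := by
  rintro u ⟨i, hi, rfl⟩ v ⟨j, hj, rfl⟩
  rcases le_or_gt i j with hij | hij
  · refine ⟨j - i, fun t => p (i + t), ⟨fun t ht => ⟨i + t, by omega, rfl⟩, fun t ht => ?_⟩, by simp, ?_⟩
    · have := (h.2.2 (i+t) (by omega) (i+t+1) (by omega)).2 (Or.inl rfl)
      rwa [show i + t + 1 = i + (t+1) from by omega] at this
    · show p (i + (j - i)) = p j; rw [show i + (j - i) = j from by omega]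
  · refine ⟨i - j, fun t => p (i - t), ⟨fun t ht => ⟨i - t, by omega, rfl⟩, fun t ht => ?_⟩, by simp, ?_⟩
    · exact (h.2.2 (i-t) (by omega) (i-(t+1)) (by omega)).2 (Or.inr (by omega))
    · show p (i - (i - j)) = p j; rw [show i - (i - j) = j from by omega]

theorem connected_union_nrange {na nb : ℕ} {a b : ℕ → V} (ha : NPath G B na a)
    (hb : NPath G B nb b) {i j : ℕ} (hi : i ≤ na) (hj : j ≤ nb) (hadj : G.Adj (a i) (b j)) :
    (G.induce (nrange a na ∪ nrange b nb)).Connected :=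
  connected_of_nwalks ⟨a 0, Or.inl ⟨0, by omega, rfl⟩⟩
    (wconn_union (wconn_nrange ha) (wconn_nrange hb) ⟨i, hi, rfl⟩ ⟨j, hj, rfl⟩ hadj)

theorem connected_nrange {n : ℕ} {p : ℕ → V} (h : NPath G B n p) :
    (G.induce (nrange p n)).Connected :=
  connected_of_nwalks ⟨p 0, ⟨0, by omega, rfl⟩⟩ (wconn_nrange h)

/-! Concatenation. -/

def nconcat {V : Type} (p q : ℕ → V) (n : ℕ) : ℕ → V := fun t => if t ≤ n then p t else q (t - (n+1))

theorem nconcat_left {p q : ℕ → V} {n t : ℕ} (h : t ≤ n) : nconcat p q n t = p t := if_pos h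
theorem nconcat_right {p q : ℕ → V} {n t : ℕ} (h : ¬ t ≤ n) : nconcat p q n t = q (t - (n+1)) :=
  if_neg h

theorem nrange_nconcat {p q : ℕ → V} {n m : ℕ} :
    nrange (nconcat p q n) (n + 1 + m) = nrange p n ∪ nrange q m := by
  ext x
  constructor
  · rintro ⟨t, ht, rfl⟩
    by_cases h : t ≤ n
    · exact Or.inl ⟨t, h, (nconcat_left h).symm⟩
    · exact Or.inr ⟨t - (n+1), by omega, (nconcat_right h).symm⟩
  · rintro (⟨t, ht, rfl⟩ | ⟨t, ht, rfl⟩)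
    · exact ⟨t, by omega, nconcat_left ht⟩
    · exact ⟨t + (n+1), by omega, by rw [nconcat_right (by omega)]; congr 1; omega⟩

theorem npath_nconcat {n m : ℕ} {p q : ℕ → V} (hp : NPath G B n p) (hq : NPath G B m q)
    (hdisj : ∀ i ≤ n, ∀ j ≤ m, p i ≠ q j)
    (hcross : ∀ i ≤ n, ∀ j ≤ m, (G.Adj (p i) (q j) ↔ (i = n ∧ j = 0))) :
    NPath G B (n + 1 + m) (nconcat p q n) :=
  npath_concat hp hq hdisj hcross
end
/-! Wrappers producing the configuration predicates from ℕ-indexed paths. -/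
section
variable {V : Type} {G : SimpleGraph V} {A B : Set V}

theorem typePathMid_of_npath {S1 S2 S3 : Set V} {n : ℕ} {p : ℕ → V} (h : NPath G A n p)
    (h1 : ∃ s ∈ S1, G.Adj (p 0) s) (h3 : ∃ s ∈ S3, G.Adj (p n) s)
    (h2 : ∃ i ≤ n, ∃ s ∈ S2, G.Adj (p i) s)
    (a1 : ∀ i, 0 < i → i ≤ n → ∀ s ∈ S1, ¬ G.Adj (p i) s)
    (a3 : ∀ i, i < n → ∀ s ∈ S3, ¬ G.Adj (p i) s) :
    TypePathCenteredMid G A S1 S2 S3 := by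
  refine ⟨n, fun i : Fin (n+1) => p i.val, npath_isPathIn h,
    ⟨p 0, Set.mem_singleton _, h1⟩, ⟨p n, Set.mem_singleton _, h3⟩, ?_, ?_, ?_⟩
  · obtain ⟨i, hi, s, hs, hadj⟩ := h2
    exact ⟨p i, by rw [range_fin_eq]; exact ⟨i, hi, rfl⟩, s, hs, hadj⟩
  · rintro v ⟨hv, hv0⟩ s hs
    rw [range_fin_eq] at hv
    obtain ⟨i, hi, rfl⟩ := hv
    simp only [Set.mem_singleton_iff] at hv0
    have hne : i ≠ 0 := fun hh => hv0 (by simp [hh])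
    exact a1 i (Nat.pos_of_ne_zero hne) hi s hs
  · rintro v ⟨hv, hv0⟩ s hs
    rw [range_fin_eq] at hv
    obtain ⟨i, hi, rfl⟩ := hv
    simp only [Set.mem_singleton_iff] at hv0
    have hne : i ≠ n := fun hh => hv0 (by simp [hh])
    exact a3 i (by omega) s hs

theorem typeClaw_of_npaths {X Y Z : Set V} {na nb nc : ℕ} {a b c : ℕ → V}
    (ha : NPath G A na a) (hb : NPath G A nb b) (hc : NPath G A nc c)
    (e1 : a 0 = b 0) (e2 : b 0 = c 0)
    (hint : ∀ x, x ∈ nrange a na → x ∈ nrange b nb → x ∈ nrange c nc → x = a 0)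
    (a12 : ∀ i ≤ na, ∀ j ≤ nb, a i ≠ a 0 → b j ≠ a 0 → ¬ G.Adj (a i) (b j))
    (a13 : ∀ i ≤ na, ∀ j ≤ nc, a i ≠ a 0 → c j ≠ a 0 → ¬ G.Adj (a i) (c j))
    (a23 : ∀ i ≤ nb, ∀ j ≤ nc, b i ≠ a 0 → c j ≠ a 0 → ¬ G.Adj (b i) (c j))
    (sX : ∃ s ∈ X, G.Adj (a na) s) (sY : ∃ s ∈ Y, G.Adj (b nb) s) (sZ : ∃ s ∈ Z, G.Adj (c nc) s)
    (aX : ∀ v, (v ∈ nrange a na ∨ v ∈ nrange b nb ∨ v ∈ nrange c nc) → v ≠ a na →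
      ∀ s ∈ X, ¬ G.Adj v s)
    (aY : ∀ v, (v ∈ nrange a na ∨ v ∈ nrange b nb ∨ v ∈ nrange c nc) → v ≠ b nb →
      ∀ s ∈ Y, ¬ G.Adj v s)
    (aZ : ∀ v, (v ∈ nrange a na ∨ v ∈ nrange b nb ∨ v ∈ nrange c nc) → v ≠ c nc →
      ∀ s ∈ Z, ¬ G.Adj v s) :
    TypeClaw G A X Y Z := by
  refine ⟨na, nb, nc, fun i : Fin (na+1) => a i.val, fun i : Fin (nb+1) => b i.val,
    fun i : Fin (nc+1) => c i.val, npath_isPathIn ha, npath_isPathIn hb, npath_isPathIn hc,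
    e1, e2, ?_, ?_, ?_, ?_, ⟨a na, Set.mem_singleton _, sX⟩, ⟨b nb, Set.mem_singleton _, sY⟩,
    ⟨c nc, Set.mem_singleton _, sZ⟩, ?_, ?_, ?_⟩
  · ext x
    simp only [Set.mem_inter_iff, Set.mem_singleton_iff, range_fin_eq]
    constructor
    · rintro ⟨⟨hxa, hxb⟩, hxc⟩
      exact hint x hxa hxb hxc
    · rintro rfl
      refine ⟨⟨⟨0, by omega, ?_⟩, ⟨0, by omega, ?_⟩⟩, ⟨0, by omega, ?_⟩⟩
      · simp
      · simp [e1]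
      · simp [e1, e2]
  · rintro v ⟨hv, hv0⟩ w ⟨hw, hw0⟩
    rw [range_fin_eq] at hv hw
    obtain ⟨i, hi, rfl⟩ := hv; obtain ⟨j, hj, rfl⟩ := hw
    simp only [Set.mem_singleton_iff] at hv0 hw0
    exact a12 i hi j hj hv0 hw0
  · rintro v ⟨hv, hv0⟩ w ⟨hw, hw0⟩
    rw [range_fin_eq] at hv hw
    obtain ⟨i, hi, rfl⟩ := hv; obtain ⟨j, hj, rfl⟩ := hw
    simp only [Set.mem_singleton_iff] at hv0 hw0
    exact a13 i hi j hj hv0 hw0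
  · rintro v ⟨hv, hv0⟩ w ⟨hw, hw0⟩
    rw [range_fin_eq] at hv hw
    obtain ⟨i, hi, rfl⟩ := hv; obtain ⟨j, hj, rfl⟩ := hw
    simp only [Set.mem_singleton_iff] at hv0 hw0
    exact a23 i hi j hj hv0 hw0
  · rintro v ⟨hv, hv0⟩ s hs
    simp only [Set.mem_union, range_fin_eq] at hv
    simp only [Set.mem_singleton_iff] at hv0
    exact aX v (by tauto) hv0 s hs
  · rintro v ⟨hv, hv0⟩ s hs
    simp only [Set.mem_union, range_fin_eq] at hv
    simp only [Set.mem_singleton_iff] at hv0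
    exact aY v (by tauto) hv0 s hs
  · rintro v ⟨hv, hv0⟩ s hs
    simp only [Set.mem_union, range_fin_eq] at hv
    simp only [Set.mem_singleton_iff] at hv0
    exact aZ v (by tauto) hv0 s hs

theorem typeTriangle_of_npaths {X Y Z : Set V} {na nb nc : ℕ} {a b c : ℕ → V}
    (ha : NPath G A na a) (hb : NPath G A nb b) (hc : NPath G A nc c)
    (d12 : ∀ i ≤ na, ∀ j ≤ nb, a i ≠ b j)
    (d13 : ∀ i ≤ na, ∀ j ≤ nc, a i ≠ c j)
    (d23 : ∀ i ≤ nb, ∀ j ≤ nc, b i ≠ c j)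
    (adj1 : G.Adj (a 0) (b 0)) (adj2 : G.Adj (b 0) (c 0)) (adj3 : G.Adj (a 0) (c 0))
    (c12 : ∀ i ≤ na, ∀ j ≤ nb, G.Adj (a i) (b j) → a i = a 0 ∧ b j = b 0)
    (c23 : ∀ i ≤ nb, ∀ j ≤ nc, G.Adj (b i) (c j) → b i = b 0 ∧ c j = c 0)
    (c13 : ∀ i ≤ na, ∀ j ≤ nc, G.Adj (a i) (c j) → a i = a 0 ∧ c j = c 0)
    (sX : ∃ s ∈ X, G.Adj (a na) s) (sY : ∃ s ∈ Y, G.Adj (b nb) s) (sZ : ∃ s ∈ Z, G.Adj (c nc) s)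
    (aX : ∀ v, (v ∈ nrange a na ∨ v ∈ nrange b nb ∨ v ∈ nrange c nc) → v ≠ a na →
      ∀ s ∈ X, ¬ G.Adj v s)
    (aY : ∀ v, (v ∈ nrange a na ∨ v ∈ nrange b nb ∨ v ∈ nrange c nc) → v ≠ b nb →
      ∀ s ∈ Y, ¬ G.Adj v s)
    (aZ : ∀ v, (v ∈ nrange a na ∨ v ∈ nrange b nb ∨ v ∈ nrange c nc) → v ≠ c nc →
      ∀ s ∈ Z, ¬ G.Adj v s) :
    TypeTriangle G A X Y Z := by
  refine ⟨na, nb, nc, fun i : Fin (na+1) => a i.val, fun i : Fin (nb+1) => b i.val,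
    fun i : Fin (nc+1) => c i.val, npath_isPathIn ha, npath_isPathIn hb, npath_isPathIn hc,
    ?_, ?_, ?_, adj1, adj2, adj3, ?_, ?_, ?_,
    ⟨a na, Set.mem_singleton _, sX⟩, ⟨b nb, Set.mem_singleton _, sY⟩,
    ⟨c nc, Set.mem_singleton _, sZ⟩, ?_, ?_, ?_⟩
  · rw [Set.disjoint_left]
    rintro x ⟨i, rfl⟩ ⟨j, hj⟩
    exact d12 i.val (by omega) j.val (by omega) hj.symm
  · rw [Set.disjoint_left]
    rintro x ⟨i, rfl⟩ ⟨j, hj⟩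
    exact d13 i.val (by omega) j.val (by omega) hj.symm
  · rw [Set.disjoint_left]
    rintro x ⟨i, rfl⟩ ⟨j, hj⟩
    exact d23 i.val (by omega) j.val (by omega) hj.symm
  · rintro u hu v hv hadj
    rw [range_fin_eq] at hu hv
    obtain ⟨i, hi, rfl⟩ := hu; obtain ⟨j, hj, rfl⟩ := hv
    exact c12 i hi j hj hadj
  · rintro u hu v hv hadj
    rw [range_fin_eq] at hu hv
    obtain ⟨i, hi, rfl⟩ := hu; obtain ⟨j, hj, rfl⟩ := hv
    exact c23 i hi j hj hadj
  · rintro u hu v hv hadj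
    rw [range_fin_eq] at hu hv
    obtain ⟨i, hi, rfl⟩ := hu; obtain ⟨j, hj, rfl⟩ := hv
    exact c13 i hi j hj hadj
  · rintro v ⟨hv, hv0⟩ s hs
    simp only [Set.mem_union, range_fin_eq] at hv
    simp only [Set.mem_singleton_iff] at hv0
    exact aX v (by tauto) hv0 s hs
  · rintro v ⟨hv, hv0⟩ s hs
    simp only [Set.mem_union, range_fin_eq] at hv
    simp only [Set.mem_singleton_iff] at hv0
    exact aY v (by tauto) hv0 s hs
  · rintro v ⟨hv, hv0⟩ s hs
    simp only [Set.mem_union, range_fin_eq] at hv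
    simp only [Set.mem_singleton_iff] at hv0
    exact aZ v (by tauto) hv0 s hs

/-! Monotonicity in the ambient connected set. -/

theorem isPathIn_mono {n : ℕ} {p : Fin (n+1) → V} (h : IsPathIn G B p) (hBA : B ⊆ A) :
    IsPathIn G A p :=
  ⟨h.1, fun i => hBA (h.2.1 i), h.2.2⟩

theorem conclusion_mono {X Y Z : Set V} (hBA : B ⊆ A)
    (h : TypePath G B X Y Z ∨ TypeClaw G B X Y Z ∨ TypeTriangle G B X Y Z) :
    TypePath G A X Y Z ∨ TypeClaw G A X Y Z ∨ TypeTriangle G A X Y Z := by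
  have mid : ∀ S1 S2 S3 : Set V, TypePathCenteredMid G B S1 S2 S3 →
      TypePathCenteredMid G A S1 S2 S3 := by
    rintro S1 S2 S3 ⟨n, p, hp, rest⟩
    exact ⟨n, p, isPathIn_mono hp hBA, rest⟩
  rcases h with (h | h | h) | ⟨nP, nQ, nR, p, q, r, h1, h2, h3, rest⟩ | ⟨nP, nQ, nR, p, q, r, h1, h2, h3, rest⟩
  · exact Or.inl (Or.inl (mid _ _ _ h))
  · exact Or.inl (Or.inr (Or.inl (mid _ _ _ h)))
  · exact Or.inl (Or.inr (Or.inr (mid _ _ _ h)))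
  · exact Or.inr (Or.inl ⟨nP, nQ, nR, p, q, r, isPathIn_mono h1 hBA, isPathIn_mono h2 hBA,
      isPathIn_mono h3 hBA, rest⟩)
  · exact Or.inr (Or.inr ⟨nP, nQ, nR, p, q, r, isPathIn_mono h1 hBA, isPathIn_mono h2 hBA,
      isPathIn_mono h3 hBA, rest⟩)
end
section
variable {V : Type} {G : SimpleGraph V} {A B : Set V}

theorem nconcat_snd {p q : ℕ → V} {n j : ℕ} : nconcat p q n (n + 1 + j) = q j := by
  rw [nconcat_right (by omega)]; congr 1; omega

theorem npath_cons {v : V} {m : ℕ} {q : ℕ → V} (hq : NPath G B m q) (hv : v ∈ B)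
    (hvq : ∀ j ≤ m, v ≠ q j)
    (hadj : ∀ j ≤ m, (G.Adj v (q j) ↔ j = 0)) :
    NPath G B (m+1) (fun t => if t = 0 then v else q (t - 1)) := by
  refine ⟨?_, ?_, ?_⟩
  · intro t ht
    show (if t = 0 then v else q (t-1)) ∈ B
    by_cases h : t = 0
    · rw [if_pos h]; exact hv
    · rw [if_neg h]; exact hq.1 (t-1) (by omega)
  · intro t ht s hs heq
    by_cases h1 : t = 0 <;> by_cases h2 : s = 0 <;>
      simp only [h1, h2, if_pos, if_neg, if_true, if_false, reduceIte] at heq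
    · omega
    · exact absurd heq (hvq (s-1) (by omega))
    · exact absurd heq.symm (hvq (t-1) (by omega))
    · have := hq.2.1 (t-1) (by omega) (s-1) (by omega) heq; omega
  · intro t ht s hs
    by_cases h1 : t = 0 <;> by_cases h2 : s = 0 <;>
      simp only [h1, h2, if_pos, if_neg, if_true, if_false, reduceIte]
    · constructor
      · intro h; exact absurd h G.irrefl
      · intro h; omega
    · rw [hadj (s-1) (by omega)]; omega
    · rw [G.adj_comm, hadj (t-1) (by omega)]; omega
    · rw [hq.2.2 (t-1) (by omega) (s-1) (by omega)]; omega

theorem nrange_cons {v : V} {q : ℕ → V} {m : ℕ} :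
    nrange (fun t => if t = 0 then v else q (t - 1)) (m+1) = insert v (nrange q m) := by
  ext x
  constructor
  · rintro ⟨t, ht, rfl⟩
    by_cases h : t = 0
    · simp only [h, reduceIte]; exact Set.mem_insert _ _
    · right
      refine ⟨t - 1, by omega, ?_⟩
      show q (t-1) = if t = 0 then v else q (t-1)
      rw [if_neg h]
  · rintro (rfl | ⟨t, ht, rfl⟩)
    · exact ⟨0, by omega, by simp⟩
    · exact ⟨t + 1, by omega, by simp⟩

theorem nrange_mem {p : ℕ → V} {n i : ℕ} (h : i ≤ n) : p i ∈ nrange p n := ⟨i, h, rfl⟩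
end

/-- If `A`, `X`, `Y`, `Z` are disjoint sets of vertices, `A` is connected
and `A` sees each of `X`, `Y` and `Z`, then `A` is of type path, claw or triangle with
respect to `X`, `Y` and `Z`. -/
theorem statement_4 {V : Type} [Fintype V] (G : SimpleGraph V) (A X Y Z : Set V)
    (hdisj : List.Pairwise Disjoint [A, X, Y, Z])
    (hconn : (G.induce A).Connected)
    (hAX : Sees G A X) (hAY : Sees G A Y) (hAZ : Sees G A Z) :
    TypePath G A X Y Z ∨ TypeClaw G A X Y Z ∨ TypeTriangle G A X Y Z := by
  classical
  suffices H : ∀ N : ℕ, ∀ A : Set V, A.ncard ≤ N → (G.induce A).Connected →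
      Sees G A X → Sees G A Y → Sees G A Z →
      TypePath G A X Y Z ∨ TypeClaw G A X Y Z ∨ TypeTriangle G A X Y Z by
    exact H A.ncard A le_rfl hconn hAX hAY hAZ
  intro N
  induction N with
  | zero =>
    intro A hcard hconn hAX hAY hAZ
    obtain ⟨a, ha, -⟩ := hAX
    have h0 : A.ncard = 0 := by omega
    rw [Set.ncard_eq_zero A.toFinite] at h0
    rw [h0] at ha
    exact absurd ha (Set.notMem_empty a)
  | succ N ih =>
    intro A hcard hconn hAX hAY hAZ
    have applyIH : ∀ B : Set V, B ⊆ A → (∃ a ∈ A, a ∉ B) → (G.induce B).Connected →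
        Sees G B X → Sees G B Y → Sees G B Z →
        TypePath G A X Y Z ∨ TypeClaw G A X Y Z ∨ TypeTriangle G A X Y Z := by
      rintro B hBA ⟨a, haA, haB⟩ hBconn hBX hBY hBZ
      have hss : B ⊂ A := (Set.ssubset_iff_of_subset hBA).2 ⟨a, haA, haB⟩
      have hlt : B.ncard < A.ncard := Set.ncard_lt_ncard hss A.toFinite
      exact conclusion_mono hBA (ih B (by omega) hBconn hBX hBY hBZ)
    -- ===== the path P between X and Z =====
    obtain ⟨a1, ha1, x1, hx1, hax1⟩ := hAX
    obtain ⟨a2, ha2, z1, hz1, haz1⟩ := hAZ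
    obtain ⟨n0, p0, hw0, h00, h0n⟩ := nwalk_of_connected hconn ha1 ha2
    obtain ⟨k, p, hP, hp0X, hpkZ, hpX, hpZ⟩ :=
      exists_min_npath (G := G) (B := A) (fun v => ∃ x ∈ X, G.Adj v x)
        (fun v => ∃ z ∈ Z, G.Adj v z)
        ⟨n0, p0, hw0, ⟨x1, hx1, by rw [h00]; exact hax1⟩, ⟨z1, hz1, by rw [h0n]; exact haz1⟩⟩
    have hpX' : ∀ i, 0 < i → i ≤ k → ∀ x ∈ X, ¬ G.Adj (p i) x :=
      fun i h1 h2 x hx h => hpX i h1 h2 ⟨x, hx, h⟩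
    have hpZ' : ∀ i, i < k → ∀ z ∈ Z, ¬ G.Adj (p i) z :=
      fun i hi z hz h => hpZ i hi ⟨z, hz, h⟩
    have hPA : ∀ i ≤ k, p i ∈ A := hP.1
    have hPinj : ∀ i ≤ k, ∀ j ≤ k, p i = p j → i = j := hP.2.1
    -- ===== Case 1 : P sees Y =====
    by_cases hPY : ∃ i ≤ k, ∃ y ∈ Y, G.Adj (p i) y
    · exact Or.inl (Or.inr (Or.inl (typePathMid_of_npath hP hp0X hpkZ hPY hpX' hpZ')))
    push_neg at hPY
    -- ===== the connecting path Q from Y to P =====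
    obtain ⟨a3, ha3, y1, hy1, hay1⟩ := hAY
    obtain ⟨n1, w, hww, hww0, hwwn⟩ := nwalk_of_connected hconn ha3 (hPA 0 (by omega))
    have hexj : ∃ t, t ≤ n1 ∧ w t ∈ nrange p k :=
      ⟨n1, le_rfl, by rw [hwwn]; exact ⟨0, by omega, rfl⟩⟩
    have hj0pos : 0 < Nat.find hexj := by
      rcases Nat.eq_zero_or_pos (Nat.find hexj) with h | h
      · exfalso
        have hsp := Nat.find_spec hexj
        rw [h] at hsp
        obtain ⟨-, i, hik, hi⟩ := hsp
        exact hPY i hik y1 hy1 (by rw [hi, hww0]; exact hay1)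
      · exact h
    have hj0n : Nat.find hexj ≤ n1 := (Nat.find_spec hexj).1
    have hwalkQ : NWalk G (A \ nrange p k) (Nat.find hexj - 1) w := by
      constructor
      · intro t ht
        refine ⟨hww.1 t (by omega), fun hmem => ?_⟩
        exact Nat.find_min hexj (show t < Nat.find hexj by omega) ⟨by omega, hmem⟩
      · intro t ht; exact hww.2 t (by omega)
    have hQend : ∃ i ≤ k, G.Adj (w (Nat.find hexj - 1)) (p i) := by
      obtain ⟨-, i, hik, hi⟩ := Nat.find_spec hexj
      refine ⟨i, hik, ?_⟩
      rw [hi]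
      have := hww.2 (Nat.find hexj - 1) (by omega)
      rwa [show Nat.find hexj - 1 + 1 = Nat.find hexj from by omega] at this
    obtain ⟨m, q, hQ, hq0Y, hqmP, hqY, hqP⟩ :=
      exists_min_npath (G := G) (B := A \ nrange p k)
        (fun v => ∃ y ∈ Y, G.Adj v y) (fun v => ∃ i ≤ k, G.Adj v (p i))
        ⟨Nat.find hexj - 1, w, hwalkQ, ⟨y1, hy1, by rw [hww0]; exact hay1⟩, hQend⟩
    have hQA : NPath G A m q := npath_mono hQ Set.diff_subset
    have hQA' : ∀ i ≤ m, q i ∈ A := hQA.1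
    have hQinj : ∀ i ≤ m, ∀ j ≤ m, q i = q j → i = j := hQA.2.1
    have hdisjQP : ∀ i ≤ m, ∀ j ≤ k, q i ≠ p j := by
      intro i hi j hj h
      exact (hQ.1 i hi).2 ⟨j, hj, h.symm⟩
    have hqY' : ∀ i, 0 < i → i ≤ m → ∀ y ∈ Y, ¬ G.Adj (q i) y :=
      fun i h1 h2 y hy h => hqY i h1 h2 ⟨y, hy, h⟩
    have hqP' : ∀ i, i < m → ∀ j ≤ k, ¬ G.Adj (q i) (p j) :=
      fun i hi j hj h => hqP i hi ⟨j, hj, h⟩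
    -- ===== junction indices =====
    have hexJ : ∃ j, j ≤ k ∧ G.Adj (q m) (p j) := by
      obtain ⟨j, hj, h⟩ := hqmP; exact ⟨j, hj, h⟩
    obtain ⟨j1, hj1k, hj1adj, hj1min⟩ :
        ∃ j1, j1 ≤ k ∧ G.Adj (q m) (p j1) ∧ ∀ j ≤ k, G.Adj (q m) (p j) → j1 ≤ j := by
      refine ⟨Nat.find hexJ, (Nat.find_spec hexJ).1, (Nat.find_spec hexJ).2, ?_⟩
      intro j hj h
      by_contra hc
      exact Nat.find_min hexJ (by omega) ⟨hj, h⟩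
    obtain ⟨j2, hj2k, hj2adj, hj2max⟩ :
        ∃ j2, j2 ≤ k ∧ G.Adj (q m) (p j2) ∧ ∀ j ≤ k, G.Adj (q m) (p j) → j ≤ j2 := by
      refine ⟨Nat.findGreatest (fun j => G.Adj (q m) (p j)) k, Nat.findGreatest_le k, ?_, ?_⟩
      · have := Nat.findGreatest_spec (P := fun j => G.Adj (q m) (p j)) hj1k hj1adj
        simpa using this
      · exact fun j hj h => Nat.le_findGreatest hj h
    have hj12 : j1 ≤ j2 := hj2max j1 hj1k hj1adj
    -- ===== the two reusable path constructions =====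
    have construct1 : j2 = 0 → (∀ s ≤ m, ∀ z ∈ Z, ¬ G.Adj (q s) z) →
        TypePath G A X Y Z ∨ TypeClaw G A X Y Z ∨ TypeTriangle G A X Y Z := by
      intro hj20 hnoZ
      have hcross : ∀ i ≤ m, ∀ j ≤ k, (G.Adj (q i) (p j) ↔ (i = m ∧ j = 0)) := by
        intro i hi j hj
        constructor
        · intro h
          rcases Nat.lt_or_ge i m with hlt | hge
          · exact absurd h (hqP' i hlt j hj)
          · have him : i = m := by omega
            subst him
            have := hj2max j hj h
            exact ⟨rfl, by omega⟩
        · rintro ⟨rfl, rfl⟩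
          have := hj2adj
          rwa [hj20] at this
      have hR : NPath G A (m + 1 + k) (nconcat q p m) := npath_nconcat hQA hP hdisjQP hcross
      refine Or.inl (Or.inl (typePathMid_of_npath hR ?_ ?_ ?_ ?_ ?_))
      · rw [nconcat_left (Nat.zero_le m)]
        exact hq0Y
      · rw [nconcat_snd]
        exact hpkZ
      · refine ⟨m + 1, by omega, ?_⟩
        rw [show m + 1 = m + 1 + 0 from by omega, nconcat_snd]
        exact hp0X
      · intro i h0 hik y hy hadj
        by_cases h : i ≤ m
        · rw [nconcat_left h] at hadj
          exact hqY' i h0 h y hy hadj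
        · rw [nconcat_right h] at hadj
          exact hPY (i - (m+1)) (by omega) y hy hadj
      · intro i hik z hz hadj
        by_cases h : i ≤ m
        · rw [nconcat_left h] at hadj
          exact hnoZ i h z hz hadj
        · rw [nconcat_right h] at hadj
          exact hpZ' (i - (m+1)) (by omega) z hz hadj
    have construct3 : j1 = k → (∀ s ≤ m, ∀ x ∈ X, ¬ G.Adj (q s) x) →
        TypePath G A X Y Z ∨ TypeClaw G A X Y Z ∨ TypeTriangle G A X Y Z := by
      intro hj1k' hnoX
      have hqrev : NPath G A m (fun t => q (m - t)) := npath_rev hQA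
      have hcross : ∀ i ≤ k, ∀ j ≤ m, (G.Adj (p i) ((fun t => q (m - t)) j) ↔ (i = k ∧ j = 0)) := by
        intro i hi j hj
        show G.Adj (p i) (q (m - j)) ↔ _
        constructor
        · intro h
          rcases Nat.lt_or_ge (m - j) m with hlt | hge
          · exact absurd h.symm (hqP' (m-j) hlt i hi)
          · have hj' : j = 0 := by omega
            subst hj'
            rw [Nat.sub_zero] at h
            have := hj1min i hi h.symm
            exact ⟨by omega, rfl⟩
        · rintro ⟨rfl, rfl⟩
          rw [Nat.sub_zero]
          have := hj1adj
          rw [hj1k'] at this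
          exact this.symm
      have hdisj' : ∀ i ≤ k, ∀ j ≤ m, p i ≠ (fun t => q (m - t)) j := by
        intro i hi j hj h
        exact hdisjQP (m-j) (by omega) i hi h.symm
      have hR : NPath G A (k + 1 + m) (nconcat p (fun t => q (m - t)) k) :=
        npath_nconcat hP hqrev hdisj' hcross
      refine Or.inl (Or.inr (Or.inr (typePathMid_of_npath hR ?_ ?_ ?_ ?_ ?_)))
      · rw [nconcat_left (Nat.zero_le k)]
        exact hp0X
      · rw [nconcat_snd]
        show ∃ y ∈ Y, G.Adj (q (m - m)) y
        rw [Nat.sub_self]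
        exact hq0Y
      · refine ⟨k, by omega, ?_⟩
        rw [nconcat_left le_rfl]
        exact hpkZ
      · intro i h0 hik x hx hadj
        by_cases h : i ≤ k
        · rw [nconcat_left h] at hadj
          exact hpX' i h0 h x hx hadj
        · rw [nconcat_right h] at hadj
          exact hnoX (m - (i - (k+1))) (by omega) x hx hadj
      · intro i hik y hy hadj
        by_cases h : i ≤ k
        · rw [nconcat_left h] at hadj
          exact hPY i h y hy hadj
        · rw [nconcat_right h] at hadj
          exact hqY' (m - (i - (k+1))) (by omega) (by omega) y hy hadj
    -- ===== case analysis =====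
    by_cases hSZ : ∃ s ≤ m, ∃ z ∈ Z, G.Adj (q s) z
    · by_cases hSX : ∃ t ≤ m, ∃ x ∈ X, G.Adj (q t) x
      · -- IH cases
        by_cases hk : k = 0
        · refine applyIH (nrange q m) ?_ ?_ (connected_nrange hQA) ?_ ?_ ?_
          · rintro v ⟨i, hi, rfl⟩; exact hQA' i hi
          · refine ⟨p 0, hPA 0 (by omega), ?_⟩
            rintro ⟨i, hi, hv⟩
            exact hdisjQP i hi 0 (by omega) hv
          · obtain ⟨t, ht, x, hx, h⟩ := hSX
            exact ⟨q t, nrange_mem ht, x, hx, h⟩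
          · exact ⟨q 0, nrange_mem (by omega), hq0Y⟩
          · obtain ⟨s, hs, z, hz, h⟩ := hSZ
            exact ⟨q s, nrange_mem hs, z, hz, h⟩
        · by_cases hj2z : j2 = 0
          · have hPt : NPath G A (k-1) p := npath_trunc hP (by omega)
            have hadj0 : G.Adj (p 0) (q m) := by
              have := hj2adj; rw [hj2z] at this; exact this.symm
            refine applyIH (nrange p (k-1) ∪ nrange q m) ?_ ?_
              (connected_union_nrange hPt hQA (Nat.zero_le _) le_rfl hadj0) ?_ ?_ ?_
            · rintro v (⟨i, hi, rfl⟩ | ⟨i, hi, rfl⟩)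
              · exact hPA i (by omega)
              · exact hQA' i hi
            · refine ⟨p k, hPA k le_rfl, ?_⟩
              rintro (⟨i, hi, hv⟩ | ⟨i, hi, hv⟩)
              · have := hPinj i (by omega) k le_rfl hv; omega
              · exact hdisjQP i hi k le_rfl hv
            · exact ⟨p 0, Or.inl (nrange_mem (Nat.zero_le _)), hp0X⟩
            · exact ⟨q 0, Or.inr (nrange_mem (Nat.zero_le _)), hq0Y⟩
            · obtain ⟨s, hs, z, hz, h⟩ := hSZ
              exact ⟨q s, Or.inr (nrange_mem hs), z, hz, h⟩
          · have hp' : NPath G A (k-1) (fun t => p (1+t)) := npath_seg hP (by omega)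
            have hadj' : G.Adj ((fun t => p (1+t)) (j2-1)) (q m) := by
              show G.Adj (p (1 + (j2-1))) (q m)
              rw [show 1 + (j2-1) = j2 from by omega]
              exact hj2adj.symm
            refine applyIH (nrange (fun t => p (1+t)) (k-1) ∪ nrange q m) ?_ ?_
              (connected_union_nrange hp' hQA (by omega) le_rfl hadj') ?_ ?_ ?_
            · rintro v (⟨i, hi, rfl⟩ | ⟨i, hi, rfl⟩)
              · exact hPA (1+i) (by omega)
              · exact hQA' i hi
            · refine ⟨p 0, hPA 0 (by omega), ?_⟩
              rintro (⟨i, hi, hv⟩ | ⟨i, hi, hv⟩)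
              · have := hPinj (1+i) (by omega) 0 (by omega) hv; omega
              · exact hdisjQP i hi 0 (by omega) hv
            · obtain ⟨t, ht, x, hx, h⟩ := hSX
              exact ⟨q t, Or.inr (nrange_mem ht), x, hx, h⟩
            · exact ⟨q 0, Or.inr (nrange_mem (Nat.zero_le _)), hq0Y⟩
            · refine ⟨p k, Or.inl ⟨k-1, le_rfl, ?_⟩, hpkZ⟩
              show p (1 + (k-1)) = p k
              rw [show 1 + (k-1) = k from by omega]
      · push_neg at hSX
        by_cases hj1K : j1 = k
        · exact construct3 hj1K hSX
        · have hPt : NPath G A (k-1) p := npath_trunc hP (by omega)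
          refine applyIH (nrange p (k-1) ∪ nrange q m) ?_ ?_
            (connected_union_nrange hPt hQA (show j1 ≤ k-1 by omega) le_rfl hj1adj.symm) ?_ ?_ ?_
          · rintro v (⟨i, hi, rfl⟩ | ⟨i, hi, rfl⟩)
            · exact hPA i (by omega)
            · exact hQA' i hi
          · refine ⟨p k, hPA k le_rfl, ?_⟩
            rintro (⟨i, hi, hv⟩ | ⟨i, hi, hv⟩)
            · have := hPinj i (by omega) k le_rfl hv; omega
            · exact hdisjQP i hi k le_rfl hv
          · exact ⟨p 0, Or.inl (nrange_mem (Nat.zero_le _)), hp0X⟩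
          · exact ⟨q 0, Or.inr (nrange_mem (Nat.zero_le _)), hq0Y⟩
          · obtain ⟨s, hs, z, hz, h⟩ := hSZ
            exact ⟨q s, Or.inr (nrange_mem hs), z, hz, h⟩
    · push_neg at hSZ
      by_cases hSX : ∃ t ≤ m, ∃ x ∈ X, G.Adj (q t) x
      · by_cases hj2z : j2 = 0
        · exact construct1 hj2z hSZ
        · have hp' : NPath G A (k-1) (fun t => p (1+t)) := npath_seg hP (by omega)
          have hadj' : G.Adj ((fun t => p (1+t)) (j2-1)) (q m) := by
            show G.Adj (p (1 + (j2-1))) (q m)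
            rw [show 1 + (j2-1) = j2 from by omega]
            exact hj2adj.symm
          refine applyIH (nrange (fun t => p (1+t)) (k-1) ∪ nrange q m) ?_ ?_
            (connected_union_nrange hp' hQA (by omega) le_rfl hadj') ?_ ?_ ?_
          · rintro v (⟨i, hi, rfl⟩ | ⟨i, hi, rfl⟩)
            · exact hPA (1+i) (by omega)
            · exact hQA' i hi
          · refine ⟨p 0, hPA 0 (by omega), ?_⟩
            rintro (⟨i, hi, hv⟩ | ⟨i, hi, hv⟩)
            · have := hPinj (1+i) (by omega) 0 (by omega) hv; omega
            · exact hdisjQP i hi 0 (by omega) hv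
          · obtain ⟨t, ht, x, hx, h⟩ := hSX
            exact ⟨q t, Or.inr (nrange_mem ht), x, hx, h⟩
          · exact ⟨q 0, Or.inr (nrange_mem (Nat.zero_le _)), hq0Y⟩
          · refine ⟨p k, Or.inl ⟨k-1, le_rfl, ?_⟩, hpkZ⟩
            show p (1 + (k-1)) = p k
            rw [show 1 + (k-1) = k from by omega]
      · push_neg at hSX
        by_cases hj12e : j1 = j2
        · by_cases hj10 : j1 = 0
          · exact construct1 (by omega) hSZ
          · by_cases hj1K : j1 = k
            · exact construct3 hj1K hSX
            · -- CLAW centered at p j1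
              have ha : NPath G A j1 (fun t => p (j1 - t)) := npath_rev (npath_trunc hP hj1k)
              have hcpath : NPath G A (k - j1) (fun t => p (j1 + t)) := npath_seg hP (by omega)
              have hrevq : NPath G A m (fun t => q (m - t)) := npath_rev hQA
              have hbadj : ∀ j ≤ m, (G.Adj (p j1) ((fun u => q (m - u)) j) ↔ j = 0) := by
                intro j hj
                show G.Adj (p j1) (q (m - j)) ↔ j = 0
                constructor
                · intro h
                  rcases Nat.lt_or_ge (m-j) m with hlt | hge
                  · exact absurd h.symm (hqP' (m-j) hlt j1 hj1k)
                  · omega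
                · rintro rfl
                  rw [Nat.sub_zero]
                  exact hj1adj.symm
              have hb : NPath G A (m+1)
                  (fun t => if t = 0 then p j1 else (fun u => q (m - u)) (t - 1)) :=
                npath_cons hrevq (hPA j1 hj1k)
                  (fun j hj h => hdisjQP (m-j) (by omega) j1 hj1k h.symm) hbadj
              refine Or.inr (Or.inl (typeClaw_of_npaths ha hb hcpath ?_ ?_ ?_ ?_ ?_ ?_ ?_ ?_ ?_ ?_ ?_ ?_))
              · simp
              · simp
              · rintro x ⟨i, hi, rfl⟩ - ⟨l, hl, hlc⟩
                have := hPinj (j1+l) (by omega) (j1-i) (by omega) hlc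
                show p (j1 - i) = p (j1 - 0)
                congr 1; omega
              · intro i hi j hj hia hjb hadj
                have hi0 : i ≠ 0 := fun h => hia (by rw [h])
                have hj0 : j ≠ 0 := by
                  intro h
                  apply hjb
                  show (if j = 0 then p j1 else (fun u => q (m-u)) (j-1)) = p (j1 - 0)
                  rw [if_pos h, Nat.sub_zero]
                have hadj' : G.Adj (p (j1-i)) (q (m - (j-1))) := by
                  have h2 : (if j = 0 then p j1 else (fun u => q (m-u)) (j-1)) = q (m - (j-1)) :=
                    if_neg hj0
                  rw [← h2]
                  exact hadj
                rcases Nat.lt_or_ge (m-(j-1)) m with hlt | hge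
                · exact hqP' (m-(j-1)) hlt (j1-i) (by omega) hadj'.symm
                · have := hj1min (j1-i) (by omega)
                    (by rw [show m - (j-1) = m from by omega] at hadj'; exact hadj'.symm)
                  omega
              · intro i hi l hl hia hlc hadj
                have hi0 : i ≠ 0 := fun h => hia (by rw [h])
                have hl0 : l ≠ 0 := by
                  intro h
                  apply hlc
                  show p (j1 + l) = p (j1 - 0)
                  rw [h, Nat.add_zero, Nat.sub_zero]
                have := (hP.2.2 (j1-i) (by omega) (j1+l) (by omega)).1 hadj
                omega
              · intro j hj l hl hjb hlc hadj
                have hj0 : j ≠ 0 := by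
                  intro h
                  apply hjb
                  show (if j = 0 then p j1 else (fun u => q (m-u)) (j-1)) = p (j1 - 0)
                  rw [if_pos h, Nat.sub_zero]
                have hl0 : l ≠ 0 := by
                  intro h
                  apply hlc
                  show p (j1 + l) = p (j1 - 0)
                  rw [h, Nat.add_zero, Nat.sub_zero]
                have hadj' : G.Adj (q (m - (j-1))) (p (j1+l)) := by
                  have h2 : (if j = 0 then p j1 else (fun u => q (m-u)) (j-1)) = q (m - (j-1)) :=
                    if_neg hj0
                  rw [← h2]; exact hadj
                rcases Nat.lt_or_ge (m-(j-1)) m with hlt | hge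
                · exact hqP' _ hlt (j1+l) (by omega) hadj'
                · have := hj2max (j1+l) (by omega)
                    (by rw [show m - (j-1) = m from by omega] at hadj'; exact hadj')
                  omega
              · show ∃ s ∈ X, G.Adj (p (j1 - j1)) s
                rw [Nat.sub_self]; exact hp0X
              · show ∃ s ∈ Y, G.Adj (if m+1 = 0 then p j1 else (fun u => q (m-u)) (m+1-1)) s
                rw [if_neg (by omega : ¬ (m+1 = 0))]
                show ∃ s ∈ Y, G.Adj (q (m - (m+1-1))) s
                rw [show m - (m+1-1) = 0 from by omega]
                exact hq0Y
              · show ∃ s ∈ Z, G.Adj (p (j1 + (k - j1))) s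
                rw [show j1 + (k-j1) = k from by omega]; exact hpkZ
              · rintro v (⟨i, hi, rfl⟩ | ⟨i, hi, rfl⟩ | ⟨i, hi, rfl⟩) hne s hs hadj
                · have hpos : 0 < j1 - i := by
                    rcases Nat.eq_zero_or_pos (j1-i) with h0 | h0
                    · exact absurd (show (fun t => p (j1-t)) i = (fun t => p (j1-t)) j1 from by
                        show p (j1-i) = p (j1-j1); rw [h0, Nat.sub_self]) hne
                    · exact h0
                  exact hpX' (j1-i) hpos (by omega) s hs hadj
                · by_cases h0 : i = 0
                  · have hadj2 : G.Adj (p j1) s := by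
                      have h2 : (if i = 0 then p j1 else (fun u => q (m-u)) (i-1)) = p j1 :=
                        if_pos h0
                      rw [← h2]; exact hadj
                    exact hpX' j1 (by omega) hj1k s hs hadj2
                  · have hadj2 : G.Adj (q (m - (i-1))) s := by
                      have h2 : (if i = 0 then p j1 else (fun u => q (m-u)) (i-1)) = q (m-(i-1)) :=
                        if_neg h0
                      rw [← h2]; exact hadj
                    exact hSX (m-(i-1)) (by omega) s hs hadj2
                · exact hpX' (j1+i) (by omega) (by omega) s hs hadj
              · rintro v (⟨i, hi, rfl⟩ | ⟨i, hi, rfl⟩ | ⟨i, hi, rfl⟩) hne s hs hadj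
                · exact hPY (j1-i) (by omega) s hs hadj
                · have hbl : (if (m+1:ℕ) = 0 then p j1 else (fun u => q (m-u)) (m+1-1)) = q 0 := by
                    rw [if_neg (by omega : ¬ ((m+1:ℕ) = 0))]
                    show q (m - (m+1-1)) = q 0
                    rw [show m - (m+1-1) = 0 from by omega]
                  by_cases h0 : i = 0
                  · have hadj2 : G.Adj (p j1) s := by
                      have h2 : (if i = 0 then p j1 else (fun u => q (m-u)) (i-1)) = p j1 :=
                        if_pos h0
                      rw [← h2]; exact hadj
                    exact hPY j1 hj1k s hs hadj2
                  · have hadj2 : G.Adj (q (m - (i-1))) s := by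
                      have h2 : (if i = 0 then p j1 else (fun u => q (m-u)) (i-1)) = q (m-(i-1)) :=
                        if_neg h0
                      rw [← h2]; exact hadj
                    have hne' : q (m - (i-1)) ≠ q 0 :=
                      fun h => hne ((if_neg h0).trans (h.trans hbl.symm))
                    have hpos : 0 < m - (i-1) := by
                      rcases Nat.eq_zero_or_pos (m - (i-1)) with hz | hz
                      · exact absurd (by rw [hz] : q (m-(i-1)) = q 0) hne'
                      · exact hz
                    exact hqY' (m-(i-1)) hpos (by omega) s hs hadj2
                · exact hPY (j1+i) (by omega) s hs hadj
              · rintro v (⟨i, hi, rfl⟩ | ⟨i, hi, rfl⟩ | ⟨i, hi, rfl⟩) hne s hs hadj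
                · exact hpZ' (j1-i) (by omega) s hs hadj
                · by_cases h0 : i = 0
                  · have hadj2 : G.Adj (p j1) s := by
                      have h2 : (if i = 0 then p j1 else (fun u => q (m-u)) (i-1)) = p j1 :=
                        if_pos h0
                      rw [← h2]; exact hadj
                    exact hpZ' j1 (by omega) s hs hadj2
                  · have hadj2 : G.Adj (q (m - (i-1))) s := by
                      have h2 : (if i = 0 then p j1 else (fun u => q (m-u)) (i-1)) = q (m-(i-1)) :=
                        if_neg h0
                      rw [← h2]; exact hadj
                    exact hSZ (m-(i-1)) (by omega) s hs hadj2
                · have hlt : j1 + i < k := by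
                    rcases Nat.lt_or_ge (j1+i) k with h0 | h0
                    · exact h0
                    · exact absurd (show (fun t => p (j1+t)) i = (fun t => p (j1+t)) (k-j1) from by
                        show p (j1+i) = p (j1+(k-j1)); congr 1; omega) hne
                  exact hpZ' (j1+i) hlt s hs hadj
        · by_cases hj21 : j2 = j1 + 1
          · -- TRIANGLE
            have ha : NPath G A j1 (fun t => p (j1 - t)) := npath_rev (npath_trunc hP hj1k)
            have hb : NPath G A m (fun t => q (m - t)) := npath_rev hQA
            have hc : NPath G A (k - j2) (fun t => p (j2 + t)) := npath_seg hP (by omega)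
            refine Or.inr (Or.inr (typeTriangle_of_npaths ha hb hc ?_ ?_ ?_ ?_ ?_ ?_ ?_ ?_ ?_ ?_ ?_ ?_ ?_ ?_ ?_))
            · intro i hi j hj h
              exact hdisjQP (m-j) (by omega) (j1-i) (by omega) (h.symm)
            · intro i hi l hl h
              have := hPinj (j1-i) (by omega) (j2+l) (by omega) h
              omega
            · intro i hi l hl h
              exact hdisjQP (m-i) (by omega) (j2+l) (by omega) h
            · show G.Adj (p (j1 - 0)) (q (m - 0))
              rw [Nat.sub_zero, Nat.sub_zero]
              exact hj1adj.symm
            · show G.Adj (q (m - 0)) (p (j2 + 0))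
              rw [Nat.sub_zero, Nat.add_zero]
              exact hj2adj
            · show G.Adj (p (j1 - 0)) (p (j2 + 0))
              exact (hP.2.2 (j1-0) (by omega) (j2+0) (by omega)).2 (Or.inl (by omega))
            · intro i hi j hj h
              have h' : G.Adj (q (m-j)) (p (j1-i)) := h.symm
              rcases Nat.lt_or_ge (m-j) m with hlt | hge
              · exact absurd h' (hqP' (m-j) hlt (j1-i) (by omega))
              · have := hj1min (j1-i) (by omega)
                  (by rw [show m - j = m from by omega] at h'; exact h')
                constructor
                · show p (j1-i) = p (j1-0)
                  congr 1; omega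
                · show q (m-j) = q (m-0)
                  congr 1; omega
            · intro i hi l hl h
              rcases Nat.lt_or_ge (m-i) m with hlt | hge
              · exact absurd h (hqP' (m-i) hlt (j2+l) (by omega))
              · have := hj2max (j2+l) (by omega)
                  (by rw [show m - i = m from by omega] at h; exact h)
                constructor
                · show q (m-i) = q (m-0); congr 1; omega
                · show p (j2+l) = p (j2+0); congr 1; omega
            · intro i hi l hl h
              have := (hP.2.2 (j1-i) (by omega) (j2+l) (by omega)).1 h
              constructor
              · show p (j1-i) = p (j1-0); congr 1; omega
              · show p (j2+l) = p (j2+0); congr 1; omega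
            · show ∃ s ∈ X, G.Adj (p (j1 - j1)) s
              rw [Nat.sub_self]; exact hp0X
            · show ∃ s ∈ Y, G.Adj (q (m - m)) s
              rw [Nat.sub_self]; exact hq0Y
            · show ∃ s ∈ Z, G.Adj (p (j2 + (k - j2))) s
              rw [show j2 + (k - j2) = k from by omega]; exact hpkZ
            · rintro v (⟨i, hi, rfl⟩ | ⟨i, hi, rfl⟩ | ⟨i, hi, rfl⟩) hne s hs hadj
              · have hpos : 0 < j1 - i := by
                  rcases Nat.eq_zero_or_pos (j1-i) with h0 | h0
                  · exact absurd (show (fun t => p (j1-t)) i = (fun t => p (j1-t)) j1 from by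
                      show p (j1-i) = p (j1-j1); rw [h0, Nat.sub_self]) hne
                  · exact h0
                exact hpX' (j1-i) hpos (by omega) s hs hadj
              · exact hSX (m-i) (by omega) s hs hadj
              · exact hpX' (j2+i) (by omega) (by omega) s hs hadj
            · rintro v (⟨i, hi, rfl⟩ | ⟨i, hi, rfl⟩ | ⟨i, hi, rfl⟩) hne s hs hadj
              · exact hPY (j1-i) (by omega) s hs hadj
              · have hpos : 0 < m - i := by
                  rcases Nat.eq_zero_or_pos (m-i) with h0 | h0
                  · exact absurd (show (fun t => q (m-t)) i = (fun t => q (m-t)) m from by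
                      show q (m-i) = q (m-m); rw [h0, Nat.sub_self]) hne
                  · exact h0
                exact hqY' (m-i) hpos (by omega) s hs hadj
              · exact hPY (j2+i) (by omega) s hs hadj
            · rintro v (⟨i, hi, rfl⟩ | ⟨i, hi, rfl⟩ | ⟨i, hi, rfl⟩) hne s hs hadj
              · exact hpZ' (j1-i) (by omega) s hs hadj
              · exact hSZ (m-i) (by omega) s hs hadj
              · have hlt : j2 + i < k := by
                  rcases Nat.lt_or_ge (j2+i) k with h0 | h0
                  · exact h0
                  · exact absurd (show (fun t => p (j2+t)) i = (fun t => p (j2+t)) (k-j2) from by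
                      show p (j2+i) = p (j2+(k-j2)); congr 1; omega) hne
                exact hpZ' (j2+i) hlt s hs hadj
          · -- CLAW centered at q m
            have hrevq : NPath G A m (fun t => q (m - t)) := npath_rev hQA
            have hra : NPath G A j1 (fun t => p (j1 - t)) := npath_rev (npath_trunc hP hj1k)
            have hrc : NPath G A (k - j2) (fun t => p (j2 + t)) := npath_seg hP (by omega)
            have ha : NPath G A (j1+1)
                (fun t => if t = 0 then q m else (fun u => p (j1 - u)) (t-1)) := by
              refine npath_cons hra (hQA' m le_rfl) ?_ ?_
              · intro j hj h
                exact hdisjQP m le_rfl (j1-j) (by omega) h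
              · intro j hj
                show G.Adj (q m) (p (j1 - j)) ↔ j = 0
                constructor
                · intro h
                  have := hj1min (j1-j) (by omega) h
                  omega
                · rintro rfl
                  rw [Nat.sub_zero]; exact hj1adj
            have hcp : NPath G A ((k-j2)+1)
                (fun t => if t = 0 then q m else (fun u => p (j2 + u)) (t-1)) := by
              refine npath_cons hrc (hQA' m le_rfl) ?_ ?_
              · intro j hj h
                exact hdisjQP m le_rfl (j2+j) (by omega) h
              · intro j hj
                show G.Adj (q m) (p (j2 + j)) ↔ j = 0
                constructor
                · intro h
                  have := hj2max (j2+j) (by omega) h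
                  omega
                · rintro rfl
                  rw [Nat.add_zero]; exact hj2adj
            refine Or.inr (Or.inl (typeClaw_of_npaths ha hrevq hcp ?_ ?_ ?_ ?_ ?_ ?_ ?_ ?_ ?_ ?_ ?_ ?_))
            · simp
            · simp
            · rintro x ⟨i, hi, rfl⟩ - ⟨l, hl, hlc⟩
              by_cases h0 : i = 0
              · show (if i = 0 then q m else (fun u => p (j1-u)) (i-1)) =
                  (if (0:ℕ) = 0 then q m else (fun u => p (j1-u)) (0-1))
                rw [if_pos h0, if_pos rfl]
              · exfalso
                have hxa : (if i = 0 then q m else (fun u => p (j1-u)) (i-1)) = p (j1-(i-1)) :=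
                  if_neg h0
                by_cases hl0 : l = 0
                · have hc0 : (if l = 0 then q m else (fun u => p (j2+u)) (l-1)) = q m := if_pos hl0
                  exact hdisjQP m le_rfl (j1-(i-1)) (by omega) (hc0.symm.trans (hlc.trans hxa))
                · have hcl : (if l = 0 then q m else (fun u => p (j2+u)) (l-1)) = p (j2+(l-1)) :=
                    if_neg hl0
                  have heq : p (j2+(l-1)) = p (j1-(i-1)) := hcl.symm.trans (hlc.trans hxa)
                  have := hPinj (j2+(l-1)) (by omega) (j1-(i-1)) (by omega) heq
                  omega
            · intro i hi j hj hia hjb hadj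
              have hi0 : i ≠ 0 := fun h => hia (by rw [h])
              have hxa : (if i = 0 then q m else (fun u => p (j1-u)) (i-1)) = p (j1-(i-1)) :=
                if_neg hi0
              have hmj : m - j < m := by
                rcases Nat.lt_or_ge (m-j) m with h0 | h0
                · exact h0
                · exfalso
                  apply hjb
                  show q (m - j) = _
                  rw [show m - j = m from by omega]
                  exact (if_pos rfl).symm
              have hadj' : G.Adj (p (j1-(i-1))) (q (m-j)) := by
                rw [← hxa]; exact hadj
              exact hqP' (m-j) hmj (j1-(i-1)) (by omega) hadj'.symm
            · intro i hi l hl hia hlc hadj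
              have hi0 : i ≠ 0 := fun h => hia (by rw [h])
              have hl0 : l ≠ 0 := fun h => hlc (by rw [h]; simp)
              have hxa : (if i = 0 then q m else (fun u => p (j1-u)) (i-1)) = p (j1-(i-1)) :=
                if_neg hi0
              have hxc : (if l = 0 then q m else (fun u => p (j2+u)) (l-1)) = p (j2+(l-1)) :=
                if_neg hl0
              have hadj' : G.Adj (p (j1-(i-1))) (p (j2+(l-1))) := by
                rw [← hxa, ← hxc]; exact hadj
              have := (hP.2.2 (j1-(i-1)) (by omega) (j2+(l-1)) (by omega)).1 hadj'
              omega
            · intro j hj l hl hjb hlc hadj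
              have hl0 : l ≠ 0 := fun h => hlc (by rw [h]; simp)
              have hmj : m - j < m := by
                rcases Nat.lt_or_ge (m-j) m with h0 | h0
                · exact h0
                · exfalso
                  apply hjb
                  show q (m - j) = _
                  rw [show m - j = m from by omega]
                  exact (if_pos rfl).symm
              have hxc : (if l = 0 then q m else (fun u => p (j2+u)) (l-1)) = p (j2+(l-1)) :=
                if_neg hl0
              have hadj' : G.Adj (q (m-j)) (p (j2+(l-1))) := by
                rw [← hxc]; exact hadj
              exact hqP' (m-j) hmj (j2+(l-1)) (by omega) hadj'
            · show ∃ s ∈ X, G.Adj (if j1+1 = 0 then q m else (fun u => p (j1-u)) (j1+1-1)) s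
              rw [if_neg (by omega : ¬ (j1+1 = 0))]
              show ∃ s ∈ X, G.Adj (p (j1 - (j1+1-1))) s
              rw [show j1 - (j1+1-1) = 0 from by omega]
              exact hp0X
            · show ∃ s ∈ Y, G.Adj (q (m - m)) s
              rw [Nat.sub_self]; exact hq0Y
            · show ∃ s ∈ Z, G.Adj (if (k-j2)+1 = 0 then q m else (fun u => p (j2+u)) ((k-j2)+1-1)) s
              rw [if_neg (by omega : ¬ ((k-j2)+1 = 0))]
              show ∃ s ∈ Z, G.Adj (p (j2 + ((k-j2)+1-1))) s
              rw [show j2 + ((k-j2)+1-1) = k from by omega]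
              exact hpkZ
            · -- aX : exclude a (j1+1) = p 0
              have hal : (if j1+1 = 0 then q m else (fun u => p (j1-u)) (j1+1-1)) = p 0 := by
                rw [if_neg (by omega : ¬ (j1+1 = 0))]
                show p (j1 - (j1+1-1)) = p 0
                rw [show j1 - (j1+1-1) = 0 from by omega]
              rintro v (⟨i, hi, rfl⟩ | ⟨i, hi, rfl⟩ | ⟨i, hi, rfl⟩) hne s hs hadj
              · by_cases h0 : i = 0
                · have hadj2 : G.Adj (q m) s := by
                    have h2 : (if i = 0 then q m else (fun u => p (j1-u)) (i-1)) = q m := if_pos h0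
                    rw [← h2]; exact hadj
                  exact hSX m le_rfl s hs hadj2
                · have hadj2 : G.Adj (p (j1-(i-1))) s := by
                    have h2 : (if i = 0 then q m else (fun u => p (j1-u)) (i-1)) = p (j1-(i-1)) :=
                      if_neg h0
                    rw [← h2]; exact hadj
                  have hpos : 0 < j1 - (i-1) := by
                    rcases Nat.eq_zero_or_pos (j1-(i-1)) with hz | hz
                    · exact absurd ((if_neg h0).trans ((by rw [hz] :
                        p (j1-(i-1)) = p 0).trans hal.symm)) hne
                    · exact hz
                  exact hpX' (j1-(i-1)) hpos (by omega) s hs hadj2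
              · exact hSX (m-i) (by omega) s hs hadj
              · by_cases h0 : i = 0
                · have hadj2 : G.Adj (q m) s := by
                    have h2 : (if i = 0 then q m else (fun u => p (j2+u)) (i-1)) = q m := if_pos h0
                    rw [← h2]; exact hadj
                  exact hSX m le_rfl s hs hadj2
                · have hadj2 : G.Adj (p (j2+(i-1))) s := by
                    have h2 : (if i = 0 then q m else (fun u => p (j2+u)) (i-1)) = p (j2+(i-1)) :=
                      if_neg h0
                    rw [← h2]; exact hadj
                  exact hpX' (j2+(i-1)) (by omega) (by omega) s hs hadj2
            · -- aY : exclude b m = q 0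
              rintro v (⟨i, hi, rfl⟩ | ⟨i, hi, rfl⟩ | ⟨i, hi, rfl⟩) hne s hs hadj
              · by_cases h0 : i = 0
                · have hadj2 : G.Adj (q m) s := by
                    have h2 : (if i = 0 then q m else (fun u => p (j1-u)) (i-1)) = q m := if_pos h0
                    rw [← h2]; exact hadj
                  have hm : 0 < m := by
                    rcases Nat.eq_zero_or_pos m with hz | hz
                    · exact absurd ((if_pos h0).trans (by rw [hz] : q m = q (m - m))) hne
                    · exact hz
                  exact hqY' m hm le_rfl s hs hadj2
                · have hadj2 : G.Adj (p (j1-(i-1))) s := by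
                    have h2 : (if i = 0 then q m else (fun u => p (j1-u)) (i-1)) = p (j1-(i-1)) :=
                      if_neg h0
                    rw [← h2]; exact hadj
                  exact hPY (j1-(i-1)) (by omega) s hs hadj2
              · have hpos : 0 < m - i := by
                  rcases Nat.eq_zero_or_pos (m-i) with hz | hz
                  · exact absurd (show (fun t => q (m-t)) i = (fun t => q (m-t)) m from by
                      show q (m-i) = q (m-m); congr 1; omega) hne
                  · exact hz
                exact hqY' (m-i) hpos (by omega) s hs hadj
              · by_cases h0 : i = 0
                · have hadj2 : G.Adj (q m) s := by
                    have h2 : (if i = 0 then q m else (fun u => p (j2+u)) (i-1)) = q m := if_pos h0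
                    rw [← h2]; exact hadj
                  have hm : 0 < m := by
                    rcases Nat.eq_zero_or_pos m with hz | hz
                    · exact absurd ((if_pos h0).trans (by rw [hz] : q m = q (m - m))) hne
                    · exact hz
                  exact hqY' m hm le_rfl s hs hadj2
                · have hadj2 : G.Adj (p (j2+(i-1))) s := by
                    have h2 : (if i = 0 then q m else (fun u => p (j2+u)) (i-1)) = p (j2+(i-1)) :=
                      if_neg h0
                    rw [← h2]; exact hadj
                  exact hPY (j2+(i-1)) (by omega) s hs hadj2
            · -- aZ : exclude c ((k-j2)+1) = p k
              have hcl : (if (k-j2)+1 = 0 then q m else (fun u => p (j2+u)) ((k-j2)+1-1)) = p k := by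
                rw [if_neg (by omega : ¬ ((k-j2)+1 = 0))]
                show p (j2 + ((k-j2)+1-1)) = p k
                rw [show j2 + ((k-j2)+1-1) = k from by omega]
              rintro v (⟨i, hi, rfl⟩ | ⟨i, hi, rfl⟩ | ⟨i, hi, rfl⟩) hne s hs hadj
              · by_cases h0 : i = 0
                · have hadj2 : G.Adj (q m) s := by
                    have h2 : (if i = 0 then q m else (fun u => p (j1-u)) (i-1)) = q m := if_pos h0
                    rw [← h2]; exact hadj
                  exact hSZ m le_rfl s hs hadj2
                · have hadj2 : G.Adj (p (j1-(i-1))) s := by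
                    have h2 : (if i = 0 then q m else (fun u => p (j1-u)) (i-1)) = p (j1-(i-1)) :=
                      if_neg h0
                    rw [← h2]; exact hadj
                  exact hpZ' (j1-(i-1)) (by omega) s hs hadj2
              · exact hSZ (m-i) (by omega) s hs hadj
              · by_cases h0 : i = 0
                · have hadj2 : G.Adj (q m) s := by
                    have h2 : (if i = 0 then q m else (fun u => p (j2+u)) (i-1)) = q m := if_pos h0
                    rw [← h2]; exact hadj
                  exact hSZ m le_rfl s hs hadj2
                · have hadj2 : G.Adj (p (j2+(i-1))) s := by
                    have h2 : (if i = 0 then q m else (fun u => p (j2+u)) (i-1)) = p (j2+(i-1)) :=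
                      if_neg h0
                    rw [← h2]; exact hadj
                  have hlt : j2 + (i-1) < k := by
                    rcases Nat.lt_or_ge (j2+(i-1)) k with hz | hz
                    · exact hz
                    · exact absurd ((if_neg h0).trans ((by congr 1; omega :
                        p (j2+(i-1)) = p k).trans hcl.symm)) hne
                  exact hpZ' (j2+(i-1)) hlt s hs hadj2
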